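/- Let X be a compact Hausdorff space with more than one point, equipped with a continuous action of a group G having the weak specification property. Then there exist an entourage U of X and a nonempty finite subset Λ ⊂ G with Λ = Λ⁻¹ such that for every nonempty finite subset F ⊂ G there is an (F,U)-separated subset Z ⊂ X with |Z| ≥ 2^(|F|/|Λ|); in particular sep(X,G,F,U) ≥ 2^(|F|/|Λ|) for every nonempty finite F ⊂ G. -/

import Mathlib

open scoped Pointwise Uniformity

/-- `dynEnt U F = U^(F) = {(x,y) : (g•x, g•y) ∈ U for all g ∈ F}`. -/
def dynEnt {G X : Type*} [SMul G X] (U : Set (X × X)) (F : Set G) : Set (X × X) :=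
  {p | ∀ g ∈ F, (g • p.1, g • p.2) ∈ U}

/-- `sepCard U F = sep(X,G,F,U)`: the maximal cardinality of an `(F,U)`-separated subset. -/
noncomputable def sepCard {G X : Type*} [SMul G X] (U : Set (X × X)) (F : Set G) : ℕ :=
  sSup {n : ℕ | ∃ Z : Finset X, Z.card = n ∧
    ∀ x ∈ Z, ∀ y ∈ Z, x ≠ y → (x, y) ∉ dynEnt U F}

/-- `Λ` is a specification subset for the entourage `U`. -/
def IsSpecificationSubset (G X : Type*) [Group G] [SMul G X]
    (U : Set (X × X)) (Λ : Finset G) : Prop :=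
  ∀ (ι : Type) (_ : Finite ι) (_ : Nonempty ι) (Ω : ι → Finset G) (x : ι → X),
    (∀ j k : ι, j ≠ k → Disjoint ((Ω j : Set G)) ((Λ : Set G) * (Ω k : Set G))) →
    ∃ y : X, ∀ i : ι, ∀ g ∈ Ω i, (g • y, g • x i) ∈ U

/-- The weak specification property for the action of `G` on the uniform space `X`. -/
def WeakSpecification (G X : Type*) [Group G] [SMul G X] [UniformSpace X] : Prop :=
  ∀ U ∈ 𝓤 X, ∃ Λ : Finset G, IsSpecificationSubset G X U Λ

/-- In a T1 uniform space, distinct points are separated by an entourage. -/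
lemma mySep {X : Type*} [UniformSpace X] [T2Space X] {a b : X} (h : a ≠ b) :
    ∃ W ∈ 𝓤 X, (a, b) ∉ W := by
  have hb : ({b}ᶜ : Set X) ∈ nhds a := (isClosed_singleton (x := b)).isOpen_compl.mem_nhds (by simpa)
  rw [UniformSpace.mem_nhds_iff] at hb
  obtain ⟨V, hV, hsub⟩ := hb
  exact ⟨V, hV, fun h' => (hsub h') rfl⟩

/-- Any set separated by an entourage has bounded cardinality (compactness). -/
lemma myBdd {X : Type*} [UniformSpace X] [CompactSpace X] {V' : Set (X × X)} (hV' : V' ∈ 𝓤 X) :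
    ∃ N : ℕ, ∀ Z : Finset X, (∀ x ∈ Z, ∀ y ∈ Z, x ≠ y → (x, y) ∉ V') → Z.card ≤ N := by
  obtain ⟨E, hE, hEsymm, hEcomp⟩ := comp_symm_mem_uniformity_sets hV'
  obtain ⟨t, ht⟩ := isCompact_univ.elim_nhds_subcover (fun x => UniformSpace.ball x E)
    (fun x _ => UniformSpace.ball_mem_nhds x hE)
  refine ⟨t.card, fun Z hsep => ?_⟩
  have hc : ∀ z : X, ∃ c ∈ t, z ∈ UniformSpace.ball c E := by
    intro z
    have := ht.2 (Set.mem_univ z)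
    simpa using this
  choose c hct hcb using hc
  refine Finset.card_le_card_of_injOn c (fun z _ => hct z) ?_
  intro z hz z' hz' hcc
  by_contra hne
  refine hsep z hz z' hz' hne (hEcomp ?_)
  refine ⟨c z, hEsymm.symm _ _ (hcb z), ?_⟩
  rw [hcc]; exact hcb z'

lemma myDynEntMem {G X : Type*} [Group G] [MulAction G X] [UniformSpace X] [CompactSpace X]
    (hcont : ∀ g : G, Continuous fun x : X => g • x) {V : Set (X × X)} (hV : V ∈ 𝓤 X)
    (F : Finset G) : dynEnt (G := G) V (F : Set G) ∈ 𝓤 X := by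
  have heq : dynEnt (G := G) V (F : Set G)
      = ⋂ g ∈ (F : Set G), {p : X × X | (g • p.1, g • p.2) ∈ V} := by
    ext p; simp [dynEnt]
  rw [heq]
  refine (Filter.biInter_mem F.finite_toSet).2 fun g _ => ?_
  exact uniformContinuous_def.1 (CompactSpace.uniformContinuous_of_continuous (hcont g)) V hV

/-- For a continuous action with weak specification of a group `G` on a compact Hausdorff
space `X` with more than one point, there are an entourage `U` and a nonempty symmetric
finite subset `Λ ⊆ G` such that for every nonempty finite `F ⊆ G` there is an
`(F,U)`-separated subset of cardinality at least `2^(|F|/|Λ|)`; in particular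
`sep(X,G,F,U) ≥ 2^(|F|/|Λ|)`. -/
theorem separated_sets_exponential_growth {G X : Type*} [Group G]
    [UniformSpace X] [CompactSpace X] [T2Space X] [MulAction G X]
    (hcont : ∀ g : G, Continuous fun x : X => g • x)
    (hbig : ∃ x y : X, x ≠ y)
    (hwsp : WeakSpecification G X) :
    ∃ U ∈ 𝓤 X, ∃ Λ : Finset G, Λ.Nonempty ∧ (Λ : Set G)⁻¹ = (Λ : Set G) ∧
      ∀ F : Finset G, F.Nonempty →
        (∃ Z : Finset X,
          (∀ x ∈ Z, ∀ y ∈ Z, x ≠ y → (x, y) ∉ dynEnt (G := G) U (F : Set G)) ∧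
          (2 : ℝ) ^ ((F.card : ℝ) / (Λ.card : ℝ)) ≤ (Z.card : ℝ)) ∧
        (2 : ℝ) ^ ((F.card : ℝ) / (Λ.card : ℝ)) ≤ (sepCard (G := G) U (F : Set G) : ℝ) := by
  classical
  obtain ⟨a, b, hab⟩ := hbig
  obtain ⟨W₁, hW₁, haW₁⟩ := mySep hab
  obtain ⟨W₂, hW₂, haW₂⟩ := mySep hab.symm
  set W : Set (X × X) := W₁ ∩ W₂ with hWdef
  have hW : W ∈ 𝓤 X := Filter.inter_mem hW₁ hW₂
  have habW : (a, b) ∉ W := fun h => haW₁ h.1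
  have hbaW : (b, a) ∉ W := fun h => haW₂ h.2
  obtain ⟨V₁, hV₁, hV₁symm, hV₁comp⟩ := comp_symm_mem_uniformity_sets hW
  obtain ⟨V, hV, hVsymm, hVcomp⟩ := comp_symm_mem_uniformity_sets hV₁
  have hVsub : V ⊆ V₁ := fun p hp => hVcomp ⟨p.2, hp, refl_mem_uniformity hV⟩
  -- the key three-fold composition fact
  let pt : Bool → X := fun t => cond t a b
  have hkey : ∀ (p q : Bool), p ≠ q → ∀ u w : X,
      (u, pt p) ∈ V → (w, pt q) ∈ V → (u, w) ∉ V := by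
    intro p q hpq u w hu hw huw
    have h1 : (pt p, w) ∈ V₁ := hVcomp ⟨u, hVsymm.symm _ _ hu, huw⟩
    have h2 : (pt p, pt q) ∈ W := hV₁comp ⟨w, h1, hVsub hw⟩
    cases p <;> cases q
    · exact hpq rfl
    · exact hbaW h2
    · exact habW h2
    · exact hpq rfl
  -- specification subset
  obtain ⟨Λ₀, hΛ₀⟩ := hwsp V hV
  set Λ : Finset G := insert (1 : G) (Λ₀ ∪ Λ₀⁻¹) with hΛdef
  have hΛ₀sub : Λ₀ ⊆ Λ := (Finset.subset_union_left).trans (Finset.subset_insert _ _)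
  have hΛne : Λ.Nonempty := ⟨1, Finset.mem_insert_self _ _⟩
  have hΛsymm : (Λ : Set G)⁻¹ = (Λ : Set G) := by
    ext g
    simp only [hΛdef, Set.mem_inv, Finset.coe_insert, Finset.coe_union, Finset.coe_inv,
      Set.mem_insert_iff, Set.mem_union, inv_eq_one]
    constructor
    · rintro (h | h | h)
      · exact Or.inl h
      · exact Or.inr (Or.inr (by simpa using h))
      · exact Or.inr (Or.inl (by simpa using h))
    · rintro (h | h | h)
      · exact Or.inl h
      · exact Or.inr (Or.inr (by simpa using h))
      · exact Or.inr (Or.inl (by simpa using h))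
  have hΛinv : ∀ g : G, g ∈ Λ → g⁻¹ ∈ Λ := by
    intro g hg
    have : g⁻¹ ∈ (Λ : Set G)⁻¹ := by simpa using hg
    rw [hΛsymm] at this
    exact_mod_cast this
  refine ⟨V, hV, Λ, hΛne, hΛsymm, ?_⟩
  intro F hF
  -- maximal separated subset S of F
  set P : Finset (Finset G) :=
    (F.powerset).filter (fun S => ∀ s ∈ S, ∀ t ∈ S, s ≠ t → s * t⁻¹ ∉ Λ) with hPdef
  have hPne : P.Nonempty := ⟨∅, by simp [hPdef]⟩
  obtain ⟨S, hSP, hSmax⟩ := Finset.exists_max_image P Finset.card hPne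
  rw [hPdef, Finset.mem_filter, Finset.mem_powerset] at hSP
  obtain ⟨hSF, hSsep⟩ := hSP
  have hcover : ∀ f ∈ F, ∃ s ∈ S, f * s⁻¹ ∈ Λ := by
    intro f hf
    by_contra hc
    push_neg at hc
    have hfS : f ∉ S := fun hfS => hc f hfS (by simp [hΛdef])
    have hins : insert f S ∈ P := by
      rw [hPdef, Finset.mem_filter, Finset.mem_powerset]
      refine ⟨Finset.insert_subset hf hSF, ?_⟩
      intro s hs t ht hst
      rcases Finset.mem_insert.1 hs with hsf | hs'
      · rcases Finset.mem_insert.1 ht with htf | ht'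
        · exact absurd (hsf.trans htf.symm) hst
        · subst hsf; exact hc t ht'
      · rcases Finset.mem_insert.1 ht with htf | ht'
        · subst htf
          intro hmem
          exact hc s hs' (by simpa [mul_inv_rev] using hΛinv _ hmem)
        · exact hSsep s hs' t ht' hst
    have := hSmax _ hins
    rw [Finset.card_insert_of_notMem hfS] at this
    omega
  have hSne : S.Nonempty := by
    obtain ⟨f, hf⟩ := hF
    obtain ⟨s, hs, -⟩ := hcover f hf
    exact ⟨s, hs⟩
  have hFsub : F ⊆ Λ * S := by
    intro f hf
    obtain ⟨s, hs, hls⟩ := hcover f hf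
    exact Finset.mem_mul.2 ⟨f * s⁻¹, hls, s, hs, by group⟩
  have hcard : F.card ≤ Λ.card * S.card :=
    (Finset.card_le_card hFsub).trans Finset.card_mul_le
  -- real exponent inequality
  have hΛpos : (0 : ℝ) < Λ.card := by exact_mod_cast hΛne.card_pos
  have hexp : (F.card : ℝ) / (Λ.card : ℝ) ≤ (S.card : ℝ) := by
    rw [div_le_iff₀ hΛpos]
    calc (F.card : ℝ) ≤ (Λ.card * S.card : ℕ) := by exact_mod_cast hcard
    _ = (S.card : ℝ) * (Λ.card : ℝ) := by push_cast; ring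
  -- specification construction
  set n := S.card with hndef
  have hnpos : 0 < n := Finset.card_pos.2 hSne
  let e : Fin n ≃ ↥S := S.equivFin.symm
  have hspec : ∀ ε : Fin n → Bool, ∃ z : X, ∀ i : Fin n, (((e i : G)) • z, pt (ε i)) ∈ V := by
    intro ε
    have hdisj : ∀ j k : Fin n, j ≠ k →
        Disjoint (({(e j : G)} : Finset G) : Set G)
          ((Λ₀ : Set G) * (({(e k : G)} : Finset G) : Set G)) := by
      intro j k hjk
      rw [Set.disjoint_left]
      rintro g hg hmem
      simp only [Finset.coe_singleton, Set.mem_singleton_iff] at hg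
      subst hg
      obtain ⟨l, hl, g', hg', hprod⟩ := Set.mem_mul.1 hmem
      simp only [Finset.coe_singleton, Set.mem_singleton_iff] at hg'
      subst hg'
      have hne : (e j : G) ≠ (e k : G) := by
        intro h
        exact hjk (e.injective (Subtype.coe_injective h))
      have : (e j : G) * (e k : G)⁻¹ ∈ Λ := by
        have : (e j : G) * (e k : G)⁻¹ = l := by rw [← hprod]; group
        rw [this]
        exact hΛ₀sub (by exact_mod_cast hl)
      exact hSsep _ (e j).2 _ (e k).2 hne this
    obtain ⟨z, hz⟩ := hΛ₀ (Fin n) inferInstance ⟨⟨0, hnpos⟩⟩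
      (fun i => {(e i : G)}) (fun i => (e i : G)⁻¹ • pt (ε i)) hdisj
    refine ⟨z, fun i => ?_⟩
    have := hz i (e i : G) (Finset.mem_singleton_self _)
    simpa [smul_smul] using this
  choose φ hφ using hspec
  -- separation of the constructed points
  have hφsep : ∀ ε ε' : Fin n → Bool, ε ≠ ε' →
      (φ ε, φ ε') ∉ dynEnt (G := G) V (F : Set G) := by
    intro ε ε' hne hmem
    obtain ⟨i, hi⟩ := Function.ne_iff.1 hne
    have hgF : (e i : G) ∈ (F : Set G) := hSF (e i).2
    exact hkey (ε i) (ε' i) hi _ _ (hφ ε i) (hφ ε' i) (hmem _ hgF)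
  have hφinj : Function.Injective φ := by
    intro ε ε' h
    by_contra hne
    refine hφsep ε ε' hne ?_
    rw [h]
    intro g _
    exact refl_mem_uniformity hV
  set Z : Finset X := Finset.image φ Finset.univ with hZdef
  have hZcard : Z.card = 2 ^ n := by
    rw [hZdef, Finset.card_image_of_injective _ hφinj, Finset.card_univ]
    simp
  have hZsep : ∀ x ∈ Z, ∀ y ∈ Z, x ≠ y → (x, y) ∉ dynEnt (G := G) V (F : Set G) := by
    intro x hx y hy hxy
    obtain ⟨ε, -, rfl⟩ := Finset.mem_image.1 hx
    obtain ⟨ε', -, rfl⟩ := Finset.mem_image.1 hy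
    exact hφsep ε ε' (fun h => hxy (by rw [h]))
  have hZbig : (2 : ℝ) ^ ((F.card : ℝ) / (Λ.card : ℝ)) ≤ (Z.card : ℝ) := by
    calc (2 : ℝ) ^ ((F.card : ℝ) / (Λ.card : ℝ))
        ≤ (2 : ℝ) ^ ((n : ℝ)) := by
          exact Real.rpow_le_rpow_of_exponent_le one_le_two hexp
      _ = ((2 ^ n : ℕ) : ℝ) := by
          rw [Real.rpow_natCast]; push_cast; ring
      _ = (Z.card : ℝ) := by rw [hZcard]
  refine ⟨⟨Z, hZsep, hZbig⟩, ?_⟩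
  -- sepCard bound
  obtain ⟨N, hN⟩ := myBdd (myDynEntMem hcont hV F)
  have hmem : Z.card ∈ {m : ℕ | ∃ Z' : Finset X, Z'.card = m ∧
      ∀ x ∈ Z', ∀ y ∈ Z', x ≠ y → (x, y) ∉ dynEnt (G := G) V (F : Set G)} :=
    ⟨Z, rfl, hZsep⟩
  have hbdd : BddAbove {m : ℕ | ∃ Z' : Finset X, Z'.card = m ∧
      ∀ x ∈ Z', ∀ y ∈ Z', x ≠ y → (x, y) ∉ dynEnt (G := G) V (F : Set G)} := by
    refine ⟨N, ?_⟩
    rintro m ⟨Z', rfl, hsep'⟩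
    exact hN Z' hsep'
  have hle : Z.card ≤ sepCard (G := G) V (F : Set G) := le_csSup hbdd hmem
  calc (2 : ℝ) ^ ((F.card : ℝ) / (Λ.card : ℝ)) ≤ (Z.card : ℝ) := hZbig
    _ ≤ (sepCard (G := G) V (F : Set G) : ℝ) := by exact_mod_cast hle
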